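/- Let $Z$ take values in $\{-1,+1\}$ with $p = \mathbb{P}(Z=+1) \in (0,1)$, and let $S:\mathcal{X}^2 \to [0,1]$ and $S^*:\mathcal{X}^2\to\{0,1\}$, $S^* = \mathbb{I}_{\mathcal{R}^*_\alpha}$ with $\mathcal{R}^*_\alpha = \{\eta > Q\}$. Define $R^+(S) = \mathbb{E}[S(X,X') \mid Z=+1]$ and $R^-(S) = \mathbb{E}[S(X,X') \mid Z=-1]$, where $\mathbb{P}(Z=+1 \mid X,X') = \eta(X,X')$. Then $\int_0^1 \mathbb{E}\big[|\eta(X,X')-Q|\,\mathbb{I}\{(X,X') \in \mathcal{R}_{S,u} \ominus \mathcal{R}^*_\alpha\}\big]\,du = (1-Q)\,p\,(R^+(S^*) - R^+(S)) + Q\,(1-p)\,(R^-(S) - R^-(S^*))$, where $\mathcal{R}_{S,u} = \{(x,x'): S(x,x') \ge u\}$. -/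

import Mathlib

open MeasureTheory Set

/-- Excess-risk reformulation. With `ν` the law of `(X,X')`, `η(X,X') = ℙ(Z = +1 ∣ X,X')`,
`p = 𝔼[η(X,X')] ∈ (0,1)`, `Q ∈ (0,1)` a threshold with `ℙ(η(X,X') = Q) = 0`,
`S* = 𝟙{η > Q}`, `R⁺(S) = 𝔼[S ∣ Z = +1]` and `R⁻(S) = 𝔼[S ∣ Z = -1]`:
`∫₀¹ 𝔼[|η - Q| 𝟙{(X,X') ∈ R_{S,u} ∆ R*}] du
  = (1-Q) p (R⁺(S*) - R⁺(S)) + Q (1-p) (R⁻(S) - R⁻(S*))`,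
where `R_{S,u} = {S ≥ u}` and `R* = {η > Q}`. -/
theorem excess_risk_reformulation {𝒳 : Type*} [MeasurableSpace 𝒳]
    (ν : Measure (𝒳 × 𝒳)) [IsProbabilityMeasure ν]
    (η : 𝒳 × 𝒳 → ℝ) (hη : Measurable η) (hη01 : ∀ q, η q ∈ Set.Icc (0 : ℝ) 1)
    (Q : ℝ) (hQ : Q ∈ Set.Ioo (0 : ℝ) 1) (hnoatom : ν {q | η q = Q} = 0)
    (S : 𝒳 × 𝒳 → ℝ) (hS : Measurable S) (hS01 : ∀ q, S q ∈ Set.Icc (0 : ℝ) 1) :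
    let p : ℝ := ∫ q, η q ∂ν
    let Sstar : 𝒳 × 𝒳 → ℝ := Set.indicator {q | Q < η q} (fun _ => (1 : ℝ))
    let Rp : (𝒳 × 𝒳 → ℝ) → ℝ := fun f => (∫ q, f q * η q ∂ν) / p
    let Rm : (𝒳 × 𝒳 → ℝ) → ℝ := fun f => (∫ q, f q * (1 - η q) ∂ν) / (1 - p)
    0 < p → p < 1 →
    (∫ u in (0:ℝ)..1, ∫ q, |η q - Q|
        * Set.indicator (symmDiff {q' | u ≤ S q'} {q' | Q < η q'}) (fun _ => (1 : ℝ)) q ∂ν)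
      = (1 - Q) * p * (Rp Sstar - Rp S) + Q * (1 - p) * (Rm S - Rm Sstar) := by
  intro p Sstar Rp Rm hp0 hp1
  have hBm : MeasurableSet {q : 𝒳 × 𝒳 | Q < η q} := measurableSet_lt measurable_const hη
  have hSstar_meas : Measurable Sstar := measurable_const.indicator hBm
  have hSstar01 : ∀ q, Sstar q ∈ Set.Icc (0:ℝ) 1 := by
    intro q
    by_cases h : Q < η q <;> simp [Sstar, Set.indicator_apply, h]
  -- integrability helper for bounded measurable functions
  have hbdd : ∀ (f : 𝒳 × 𝒳 → ℝ) (C : ℝ), Measurable f → (∀ q, |f q| ≤ C) → Integrable f ν := by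
    intro f C hf h
    exact ⟨hf.aestronglyMeasurable, HasFiniteIntegral.of_bounded (C := C) (ae_of_all _ h)⟩
  have habs : ∀ (f g : 𝒳 × 𝒳 → ℝ), (∀ q, f q ∈ Set.Icc (0:ℝ) 1) → (∀ q, g q ∈ Set.Icc (0:ℝ) 1) →
      ∀ q, |f q * g q| ≤ 1 := by
    intro f g hf hg q
    rw [abs_mul, abs_of_nonneg (hf q).1, abs_of_nonneg (hg q).1]
    exact mul_le_one₀ (hf q).2 (hg q).1 (hg q).2
  have h1η : ∀ q, (fun q => 1 - η q) q ∈ Set.Icc (0:ℝ) 1 := by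
    intro q; dsimp only; constructor <;> [linarith [(hη01 q).2]; linarith [(hη01 q).1]]
  have hint1 : Integrable (fun q => Sstar q * η q) ν :=
    hbdd _ 1 (hSstar_meas.mul hη) (habs _ _ hSstar01 hη01)
  have hint2 : Integrable (fun q => S q * η q) ν :=
    hbdd _ 1 (hS.mul hη) (habs _ _ hS01 hη01)
  have hint3 : Integrable (fun q => S q * (1 - η q)) ν :=
    hbdd _ 1 (hS.mul (measurable_const.sub hη)) (habs _ _ hS01 h1η)
  have hint4 : Integrable (fun q => Sstar q * (1 - η q)) ν :=
    hbdd _ 1 (hSstar_meas.mul (measurable_const.sub hη)) (habs _ _ hSstar01 h1η)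
  set I1 := ∫ q, Sstar q * η q ∂ν
  set I2 := ∫ q, S q * η q ∂ν
  set I3 := ∫ q, S q * (1 - η q) ∂ν
  set I4 := ∫ q, Sstar q * (1 - η q) ∂ν
  -- RHS simplification
  have hRHS : (1 - Q) * p * (Rp Sstar - Rp S) + Q * (1 - p) * (Rm S - Rm Sstar)
      = (1 - Q) * (I1 - I2) + Q * (I3 - I4) := by
    have hp : p ≠ 0 := ne_of_gt hp0
    have hp' : (1 : ℝ) - p ≠ 0 := by linarith
    simp only [Rp, Rm]
    field_simp
    ring
  rw [hRHS]
  -- the pointwise identity for the integrand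
  have hpt : ∀ (u : ℝ) (q : 𝒳 × 𝒳),
      |η q - Q| * Set.indicator (symmDiff {q' | u ≤ S q'} {q' | Q < η q'}) (fun _ => (1:ℝ)) q
      = (η q - Q) * (Sstar q - Set.indicator {q' | u ≤ S q'} (fun _ => (1:ℝ)) q) := by
    intro u q
    simp only [Sstar]
    by_cases h1 : u ≤ S q <;> by_cases h2 : Q < η q
    · rw [Set.indicator_of_notMem (by simp [Set.mem_symmDiff, h1, h2]),
        Set.indicator_of_mem (show q ∈ {q' | Q < η q'} from h2), Set.indicator_of_mem (show q ∈ {q' | u ≤ S q'} from h1)]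
      ring
    · rw [Set.indicator_of_mem (by simp [Set.mem_symmDiff, h1, h2]),
        Set.indicator_of_notMem (show q ∉ {q' | Q < η q'} from h2), Set.indicator_of_mem (show q ∈ {q' | u ≤ S q'} from h1),
        abs_of_nonpos (by linarith [not_lt.mp h2])]
      ring
    · rw [Set.indicator_of_mem (by simp [Set.mem_symmDiff, h1, h2]),
        Set.indicator_of_mem (show q ∈ {q' | Q < η q'} from h2), Set.indicator_of_notMem (show q ∉ {q' | u ≤ S q'} from h1),
        abs_of_pos (by linarith)]
      ring
    · rw [Set.indicator_of_notMem (by simp [Set.mem_symmDiff, h1, h2]),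
        Set.indicator_of_notMem (show q ∉ {q' | Q < η q'} from h2), Set.indicator_of_notMem (show q ∉ {q' | u ≤ S q'} from h1)]
      ring
  -- Fubini
  have hG_meas : Measurable (fun (r : ℝ × (𝒳 × 𝒳)) =>
      (η r.2 - Q) * (Sstar r.2 - Set.indicator {q' | r.1 ≤ S q'} (fun _ => (1:ℝ)) r.2)) := by
    have hset : MeasurableSet {r : ℝ × (𝒳 × 𝒳) | r.1 ≤ S r.2} :=
      measurableSet_le measurable_fst (hS.comp measurable_snd)
    have : (fun (r : ℝ × (𝒳 × 𝒳)) => Set.indicator {q' | r.1 ≤ S q'} (fun _ => (1:ℝ)) r.2)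
        = Set.indicator {r : ℝ × (𝒳 × 𝒳) | r.1 ≤ S r.2} (fun _ => (1:ℝ)) := by
      funext r
      by_cases h : r.1 ≤ S r.2 <;> simp [Set.indicator_apply, h]
    refine ((hη.comp measurable_snd).sub measurable_const).mul
      ((hSstar_meas.comp measurable_snd).sub ?_)
    rw [this]
    exact measurable_const.indicator hset
  haveI : IsFiniteMeasure (volume.restrict (Ioc (0:ℝ) 1)) := by
    constructor
    rw [Measure.restrict_apply_univ]
    simp [Real.volume_Ioc]
  have hGint : Integrable (Function.uncurry (fun (u : ℝ) (q : 𝒳 × 𝒳) =>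
      (η q - Q) * (Sstar q - Set.indicator {q' | u ≤ S q'} (fun _ => (1:ℝ)) q)))
      ((volume.restrict (Ioc (0:ℝ) 1)).prod ν) := by
    refine ⟨hG_meas.aestronglyMeasurable, HasFiniteIntegral.of_bounded (C := 4) (ae_of_all _ ?_)⟩
    rintro ⟨u, q⟩
    simp only [Function.uncurry, Real.norm_eq_abs, abs_mul]
    have h1 : |η q - Q| ≤ 2 := by
      rw [abs_le]; constructor <;> [linarith [(hη01 q).1, hQ.2]; linarith [(hη01 q).2, hQ.1]]
    have h2 : |Sstar q - Set.indicator {q' | u ≤ S q'} (fun _ => (1:ℝ)) q| ≤ 2 := by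
      have hi : Set.indicator {q' | u ≤ S q'} (fun _ => (1:ℝ)) q ∈ Set.Icc (0:ℝ) 1 := by
        by_cases h : u ≤ S q <;> simp [Set.indicator_apply, h]
      rw [abs_le]
      constructor <;> [linarith [(hSstar01 q).1, hi.2]; linarith [(hSstar01 q).2, hi.1]]
    calc |η q - Q| * |Sstar q - Set.indicator {q' | u ≤ S q'} (fun _ => (1:ℝ)) q|
        ≤ 2 * 2 := mul_le_mul h1 h2 (abs_nonneg _) (by norm_num)
      _ = 4 := by norm_num
  -- compute the LHS
  have hinner : ∀ q : 𝒳 × 𝒳,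
      (∫ u in Ioc (0:ℝ) 1, (η q - Q) * (Sstar q - Set.indicator {q' | u ≤ S q'} (fun _ => (1:ℝ)) q))
      = (η q - Q) * (Sstar q - S q) := by
    intro q
    have hfun : (fun u => (η q - Q) * (Sstar q - Set.indicator {q' | u ≤ S q'} (fun _ => (1:ℝ)) q))
        = fun u => (η q - Q) * (Sstar q - Set.indicator (Iic (S q)) (fun _ => (1:ℝ)) u) := by
      funext u
      by_cases h : u ≤ S q <;> simp [Set.indicator_apply, h]
    rw [hfun]
    have hIic : Integrable (fun u => Set.indicator (Iic (S q)) (fun _ => (1:ℝ)) u)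
        (volume.restrict (Ioc (0:ℝ) 1)) := by
      refine ⟨(measurable_const.indicator measurableSet_Iic).aestronglyMeasurable,
        HasFiniteIntegral.of_bounded (C := 1) (ae_of_all _ ?_)⟩
      intro u
      by_cases h : u ≤ S q <;> simp [Set.indicator_apply, h]
    rw [integral_const_mul, integral_sub (integrable_const _) hIic, integral_const,
      integral_indicator_const (1:ℝ) measurableSet_Iic]
    have hmeas : volume.restrict (Ioc (0:ℝ) 1) (Iic (S q)) = ENNReal.ofReal (S q) := by
      rw [Measure.restrict_apply measurableSet_Iic]
      have : Iic (S q) ∩ Ioc (0:ℝ) 1 = Ioc 0 (S q) := by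
        ext u
        simp only [mem_inter_iff, mem_Iic, mem_Ioc]
        constructor
        · rintro ⟨h1, h2, h3⟩; exact ⟨h2, h1⟩
        · rintro ⟨h1, h2⟩; exact ⟨h2, h1, le_trans h2 (hS01 q).2⟩
      rw [this, Real.volume_Ioc, sub_zero]
    rw [measureReal_def, measureReal_def, hmeas, Measure.restrict_apply_univ, Real.volume_Ioc, ENNReal.toReal_ofReal (hS01 q).1]
    simp only [ENNReal.toReal_ofReal (by norm_num : (0:ℝ) ≤ 1 - 0), smul_eq_mul]
    norm_num
  have hLHS : (∫ u in (0:ℝ)..1, ∫ q, |η q - Q|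
        * Set.indicator (symmDiff {q' | u ≤ S q'} {q' | Q < η q'}) (fun _ => (1 : ℝ)) q ∂ν)
      = ∫ q, (η q - Q) * (Sstar q - S q) ∂ν := by
    rw [intervalIntegral.integral_of_le zero_le_one]
    have : ∀ u : ℝ, (∫ q, |η q - Q|
        * Set.indicator (symmDiff {q' | u ≤ S q'} {q' | Q < η q'}) (fun _ => (1 : ℝ)) q ∂ν)
        = ∫ q, (η q - Q) * (Sstar q - Set.indicator {q' | u ≤ S q'} (fun _ => (1:ℝ)) q) ∂ν := by
      intro u
      exact integral_congr_ae (ae_of_all _ fun q => hpt u q)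
    rw [integral_congr_ae (ae_of_all _ this)]
    rw [integral_integral_swap hGint]
    exact integral_congr_ae (ae_of_all _ hinner)
  rw [hLHS]
  -- final algebraic matching
  have hexp : ∀ q : 𝒳 × 𝒳, (η q - Q) * (Sstar q - S q)
      = ((1 - Q) * (Sstar q * η q) - (1 - Q) * (S q * η q))
        + ((Q * (S q * (1 - η q))) - (Q * (Sstar q * (1 - η q)))) := by
    intro q; ring
  rw [integral_congr_ae (ae_of_all _ hexp)]
  have e1 : Integrable (fun q => (1-Q) * (Sstar q * η q) - (1-Q) * (S q * η q)) ν :=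
    (hint1.const_mul _).sub (hint2.const_mul _)
  have e2 : Integrable (fun q => Q * (S q * (1 - η q)) - Q * (Sstar q * (1 - η q))) ν :=
    (hint3.const_mul _).sub (hint4.const_mul _)
  have e3 : Integrable (fun q => (1-Q) * (Sstar q * η q)) ν := hint1.const_mul _
  have e4 : Integrable (fun q => (1-Q) * (S q * η q)) ν := hint2.const_mul _
  have e5 : Integrable (fun q => Q * (S q * (1 - η q))) ν := hint3.const_mul _
  have e6 : Integrable (fun q => Q * (Sstar q * (1 - η q))) ν := hint4.const_mul _
  rw [integral_add e1 e2, integral_sub e3 e4, integral_sub e5 e6,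
    integral_const_mul, integral_const_mul, integral_const_mul, integral_const_mul]
  ring
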